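/- Let S be a commutative ring in which 2 = 0, let B = S[w_1, w_2, ...] with the derivation ∂(w_1) = 0, ∂(w_n) = w_{n-1}^2. Then every element of ker(∂) is congruent modulo im(∂) to an element of the form s + t·w_1 with s, t ∈ S, and if s + t·w_1 ∈ im(∂) then s = t = 0. -/

import Mathlib

open MvPolynomial

/-- The derivation on `B = S[w_1, w_2, ...]` (with `w_n = X (n-1)`) determined by
`∂(w_1) = 0` and `∂(w_n) = w_{n-1}^2` for `n ≥ 2`. -/
noncomputable def bockDeriv (S : Type*) [CommRing S] :
    Derivation S (MvPolynomial ℕ S) (MvPolynomial ℕ S) :=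
  MvPolynomial.mkDerivation S (fun n => if n = 0 then 0 else (X (n - 1)) ^ 2)

namespace BockAux

variable {S : Type*} [CommRing S]

/-- The "bad at `i`" predicate on exponents. -/
def Qp (α : ℕ →₀ ℕ) (i : ℕ) : Prop := 2 ≤ α i ∨ Odd (α (i + 1))

instance (α : ℕ →₀ ℕ) : DecidablePred (Qp α) := fun i => by
  unfold Qp; infer_instance

open scoped Classical in
/-- Value of the contracting homotopy on a monomial exponent. -/
noncomputable def Hf (S : Type*) [CommRing S] (α : ℕ →₀ ℕ) : MvPolynomial ℕ S :=
  if h : ∃ i, Qp α i then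
    if Odd (α (Nat.find h + 1)) then 0
    else monomial (α + Finsupp.single (Nat.find h + 1) 1 - Finsupp.single (Nat.find h) 2) 1
  else 0

/-- The contracting homotopy. -/
noncomputable def hmap (S : Type*) [CommRing S] : MvPolynomial ℕ S →ₗ[S] MvPolynomial ℕ S :=
  Finsupp.lsum S (fun α => (LinearMap.ringLmapEquivSelf S S _).symm (Hf S α))
    ∘ₗ (AddMonoidAlgebra.coeffLinearEquiv S).toLinearMap

theorem hmap_monomial (α : ℕ →₀ ℕ) (c : S) : hmap S (monomial α c) = c • Hf S α :=
  sum_monomial_eq <| LinearMap.map_zero _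

section char2
variable (h2 : (2 : S) = 0)

include h2

theorem cast_even {k : ℕ} (hk : Even k) : ((k : ℕ) : S) = 0 := by
  obtain ⟨m, rfl⟩ := hk
  push_cast
  rw [← two_mul, h2, zero_mul]

theorem cast_odd {k : ℕ} (hk : Odd k) : ((k : ℕ) : S) = 1 := by
  obtain ⟨m, rfl⟩ := hk
  push_cast
  rw [h2, zero_mul, zero_add]

theorem bd_monomial (α : ℕ →₀ ℕ) (c : S) :
    bockDeriv S (monomial α c) =
      ∑ j ∈ α.support, if j = 0 ∨ Even (α j) then 0
        else monomial (α - Finsupp.single j 1 + Finsupp.single (j - 1) 2) c := by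
  rw [bockDeriv, mkDerivation_monomial, Finsupp.sum, Finset.smul_sum]
  refine Finset.sum_congr rfl fun j hj => ?_
  by_cases hj0 : j = 0
  · subst hj0; simp
  by_cases he : Even (α j)
  · rw [if_pos (Or.inr he), cast_even h2 he]
    simp
  · have hodd : Odd (α j) := Nat.not_even_iff_odd.mp he
    rw [if_neg (by tauto)]
    simp [cast_odd h2 hodd, X_pow_eq_monomial, monomial_mul, smul_monomial, hj0, he, smul_eq_mul]

theorem add_self (p : MvPolynomial ℕ S) : p + p = 0 := by
  have : p + p = ((1 : S) + 1) • p := by rw [add_smul, one_smul]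
  rw [this, show (1 : S) + 1 = 2 by norm_num, h2, zero_smul]

end char2

theorem Hf_eq {β : ℕ →₀ ℕ} {i : ℕ} (hlt : ∀ k < i, ¬Qp β k) (hQ : Qp β i) :
    Hf S β = if Odd (β (i + 1)) then 0
      else monomial (β + Finsupp.single (i + 1) 1 - Finsupp.single i 2) 1 := by
  have hex : ∃ k, Qp β k := ⟨i, hQ⟩
  rw [Hf, dif_pos hex, (Nat.find_eq_iff hex).2 ⟨hQ, hlt⟩]

theorem Hf_of_not {β : ℕ →₀ ℕ} (h : ∀ i, ¬Qp β i) : Hf S β = 0 := by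
  rw [Hf, dif_neg (not_exists.mpr h)]

theorem not_Qp_iff (β : ℕ →₀ ℕ) (i : ℕ) : ¬Qp β i ↔ β i ≤ 1 ∧ β (i + 1) % 2 = 0 := by
  unfold Qp
  rw [not_or, Nat.odd_iff]
  omega

theorem no_bad {α : ℕ →₀ ℕ} (h : ∀ i, ¬Qp α i) : α = 0 ∨ α = Finsupp.single 0 1 := by
  simp only [not_Qp_iff] at h
  have hz : ∀ j, 1 ≤ j → α j = 0 := by
    intro j hj
    obtain ⟨k, rfl⟩ : ∃ k, j = k + 1 := ⟨j - 1, by omega⟩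
    have h1 := (h k).2
    have h2 := (h (k + 1)).1
    omega
  by_cases h0 : α 0 = 0
  · left
    ext j
    rcases Nat.eq_zero_or_pos j with rfl | hj
    · simpa using h0
    · simpa using hz j hj
  · right
    have h1 : α 0 = 1 := by have := (h 0).1; omega
    ext j
    rcases Nat.eq_zero_or_pos j with rfl | hj
    · simpa [Finsupp.single_apply] using h1
    · simp only [Finsupp.single_apply]
      rw [if_neg (by omega)]
      exact hz j hj

theorem bad_ne {α : ℕ →₀ ℕ} {i : ℕ} (hQ : Qp α i) :
    α ≠ 0 ∧ α ≠ Finsupp.single 0 1 := by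
  constructor <;> rintro rfl
  · rcases hQ with h | h
    · simp at h
    · simp [Nat.odd_iff] at h
  · rcases hQ with h | h
    · simp [Finsupp.single_apply] at h
      split at h <;> omega
    · rw [Finsupp.single_apply, if_neg (by omega)] at h
      simp [Nat.odd_iff] at h

section main
variable (h2 : (2 : S) = 0)
include h2

omit [CommRing S] h2 in
/-- coordinates helper -/
theorem coords (α : ℕ →₀ ℕ) (a b k : ℕ) (m n : ℕ) :
    (α - Finsupp.single a m + Finsupp.single b n) k
      = α k - (if a = k then m else 0) + (if b = k then n else 0) := by
  simp [Finsupp.single_apply]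

theorem main_monomial (α : ℕ →₀ ℕ) (c : S) :
    bockDeriv S (hmap S (monomial α c)) + hmap S (bockDeriv S (monomial α c)) =
      monomial α c -
        (C (coeff 0 (monomial α c)) + C (coeff (Finsupp.single 0 1) (monomial α c)) * X 0) := by
  have hT : hmap S (bockDeriv S (monomial α c)) =
      ∑ j ∈ α.support, (if j = 0 ∨ Even (α j) then 0
        else c • Hf S (α - Finsupp.single j 1 + Finsupp.single (j - 1) 2)) := by
    rw [bd_monomial h2, map_sum]
    exact Finset.sum_congr rfl fun j _ => by
      rw [apply_ite (hmap S), map_zero, hmap_monomial]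
  by_cases hex : ∃ i, Qp α i
  · -- bad case
    obtain ⟨i, hQ, hlt⟩ : ∃ i, Qp α i ∧ ∀ k < i, ¬Qp α k :=
      ⟨Nat.find hex, Nat.find_spec hex, fun k hk => Nat.find_min hex hk⟩
    have hne := bad_ne hQ
    have hπ : monomial α c -
        (C (coeff 0 (monomial α c)) + C (coeff (Finsupp.single 0 1) (monomial α c)) * X 0)
        = monomial α c := by
      rw [coeff_monomial, if_neg hne.1, coeff_monomial, if_neg hne.2]
      simp
    rw [hπ]
    have hsmall : ∀ k, 1 ≤ k → k < i → α k = 0 := by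
      intro k h1 h2'
      have ha := (not_Qp_iff α k).mp (hlt k h2')
      obtain ⟨k', rfl⟩ : ∃ k', k = k' + 1 := ⟨k - 1, by omega⟩
      have hb := (not_Qp_iff α k').mp (hlt k' (by omega))
      omega
    have heven_i : 1 ≤ i → α i % 2 = 0 := by
      intro h1
      obtain ⟨i', rfl⟩ : ∃ i', i = i' + 1 := ⟨i - 1, by omega⟩
      exact ((not_Qp_iff α i').mp (hlt i' (by omega))).2
    by_cases hodd : Odd (α (i + 1))
    · -- case B
      have hop : α (i + 1) % 2 = 1 := Nat.odd_iff.mp hodd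
      have HfB : Hf S α = 0 := by rw [Hf_eq hlt hQ, if_pos hodd]
      rw [hmap_monomial, HfB, smul_zero, map_zero, zero_add, hT]
      rw [Finset.sum_eq_single (i + 1)]
      · rw [if_neg (by simp [Nat.not_even_iff_odd, hodd])]
        have : Hf S (α - Finsupp.single (i + 1) 1 + Finsupp.single (i + 1 - 1) 2)
            = monomial α 1 := by
          set β := α - Finsupp.single (i + 1) 1 + Finsupp.single (i + 1 - 1) 2 with hβdef
          have hβ : ∀ k, β k = α k - (if i + 1 = k then 1 else 0)
              + (if i = k then 2 else 0) := fun k => coords α _ _ k 1 2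
          have hβlt : ∀ k < i, ¬Qp β k := by
            intro k hk
            rw [not_Qp_iff]
            have h1 := (not_Qp_iff α k).mp (hlt k hk)
            have e1 := hβ k
            have e2 := hβ (k + 1)
            rcases Nat.lt_or_ge (k + 1) i with h | h
            · rw [if_neg (by omega), if_neg (by omega)] at e1
              rw [if_neg (by omega), if_neg (by omega)] at e2
              omega
            · have hki : k + 1 = i := by omega
              rw [if_neg (by omega), if_neg (by omega)] at e1
              rw [if_neg (by omega), if_pos (by omega)] at e2
              have := heven_i (by omega)
              omega
          have hβQ : Qp β i := by
            left
            have e1 := hβ i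
            rw [if_neg (by omega), if_pos rfl] at e1
            omega
          rw [Hf_eq hβlt hβQ, if_neg ?hpar]
          case hpar =>
            have e2 := hβ (i + 1)
            rw [if_pos rfl, if_neg (by omega)] at e2
            rw [Nat.not_odd_iff_even, Nat.even_iff]
            omega
          have hEE : β + Finsupp.single (i + 1) 1 - Finsupp.single i 2 = α := by
            ext k
            have e := hβ k
            simp only [Finsupp.tsub_apply, Finsupp.add_apply, Finsupp.single_apply]
            rcases Nat.decEq (i + 1) k with h | h
            · rw [if_neg h] at e ⊢
              rcases Nat.decEq i k with h' | h'
              · rw [if_neg h'] at e ⊢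
                omega
              · rw [if_pos h'] at e ⊢
                omega
            · subst h
              rw [if_pos rfl] at e ⊢
              rw [if_neg (by omega)] at e ⊢
              omega
          rw [hEE]
        rw [this]
        simp [smul_monomial]
      · -- other indices vanish
        intro b hb hbne
        by_cases hb0 : b = 0
        · rw [if_pos (Or.inl hb0)]
        by_cases hbe : Even (α b)
        · rw [if_pos (Or.inr hbe)]
        rw [if_neg (by tauto)]
        have hbs := Finsupp.mem_support_iff.mp hb
        have hbo : α b % 2 = 1 := Nat.odd_iff.mp (Nat.not_even_iff_odd.mp hbe)
        have hbge : i + 2 ≤ b := by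
          rcases Nat.lt_or_ge b i with h | h
          · exact absurd (hsmall b (by omega) h) hbs
          rcases Nat.eq_or_lt_of_le h with h' | h'
          · exfalso
            have hei := heven_i (by omega)
            rw [h'] at hei
            omega
          · omega
        set β := α - Finsupp.single b 1 + Finsupp.single (b - 1) 2 with hβdef
        have hβ : ∀ k, β k = α k - (if b = k then 1 else 0)
            + (if b - 1 = k then 2 else 0) := fun k => coords α _ _ k 1 2
        have hβlt : ∀ k < i, ¬Qp β k := by
          intro k hk
          rw [not_Qp_iff]
          have h1 := (not_Qp_iff α k).mp (hlt k hk)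
          have e1 := hβ k
          have e2 := hβ (k + 1)
          rw [if_neg (by omega), if_neg (by omega)] at e1
          rw [if_neg (by omega), if_neg (by omega)] at e2
          omega
        have hβQ : Qp β i := by
          right
          have e2 := hβ (i + 1)
          rw [if_neg (by omega)] at e2
          rw [Nat.odd_iff]
          rcases Nat.decEq (b - 1) (i + 1) with h | h
          · rw [if_neg h] at e2
            omega
          · rw [if_pos h] at e2
            omega
        rw [Hf_eq hβlt hβQ, if_pos ?hpar, smul_zero]
        case hpar =>
          have e2 := hβ (i + 1)
          rw [if_neg (by omega)] at e2
          rw [Nat.odd_iff]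
          rcases Nat.decEq (b - 1) (i + 1) with h | h
          · rw [if_neg h] at e2
            omega
          · rw [if_pos h] at e2
            omega
      · intro hns
        exact absurd (Finsupp.mem_support_iff.mpr (by omega)) hns
    · -- case C
      have hev : α (i + 1) % 2 = 0 := Nat.even_iff.mp (Nat.not_odd_iff_even.mp hodd)
      have h2i : 2 ≤ α i := hQ.resolve_right hodd
      set γ := α + Finsupp.single (i + 1) 1 - Finsupp.single i 2 with hγdef
      have hγ : ∀ k, γ k = α k + (if i + 1 = k then 1 else 0) - (if i = k then 2 else 0) := by
        intro k
        rw [hγdef]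
        simp [Finsupp.single_apply]
      have HfC : Hf S α = monomial γ 1 := by rw [Hf_eq hlt hQ, if_neg hodd]
      have hγi1 : γ (i + 1) = α (i + 1) + 1 := by
        have e := hγ (i + 1)
        rw [if_pos rfl, if_neg (by omega)] at e
        omega
      have hγmem : i + 1 ∈ γ.support := Finsupp.mem_support_iff.mpr (by omega)
      set A := α.support ∪ γ.support with hAdef
      set g : ℕ → MvPolynomial ℕ S := fun j => if j = 0 ∨ Even (γ j) then 0
        else monomial (γ - Finsupp.single j 1 + Finsupp.single (j - 1) 2) c with hgdef
      have hsum1 : bockDeriv S (hmap S (monomial α c))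
          = g (i + 1) + ∑ j ∈ A.erase (i + 1), g j := by
        calc bockDeriv S (hmap S (monomial α c))
            = ∑ j ∈ γ.support, g j := by
              rw [hmap_monomial, HfC, Derivation.map_smul, bd_monomial h2 γ 1, Finset.smul_sum]
              refine Finset.sum_congr rfl fun j _ => ?_
              simp only [hgdef]
              split_ifs
              · exact smul_zero c
              · rw [smul_monomial, smul_eq_mul, mul_one]
          _ = ∑ j ∈ A, g j := by
              refine Finset.sum_subset Finset.subset_union_right fun j _ hj => ?_
              have hz : γ j = 0 := Finsupp.notMem_support_iff.mp hj
              simp only [hgdef]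
              exact if_pos (Or.inr (by rw [hz]; exact Even.zero))
          _ = g (i + 1) + ∑ j ∈ A.erase (i + 1), g j :=
              (Finset.add_sum_erase A g (Finset.mem_union_right _ hγmem)).symm
      have hsum2 : hmap S (bockDeriv S (monomial α c)) = ∑ j ∈ A.erase (i + 1), g j := by
        rw [hT]
        rw [Finset.sum_subset (Finset.subset_union_left : α.support ⊆ A) (fun j _ hj => by
          have hz : α j = 0 := Finsupp.notMem_support_iff.mp hj
          exact if_pos (Or.inr (by rw [hz]; exact Even.zero)))]
        rw [← Finset.add_sum_erase A _ (Finset.mem_union_right _ hγmem)]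
        rw [if_pos (Or.inr (Nat.even_iff.mpr hev)), zero_add]
        refine Finset.sum_congr rfl fun j hj => ?_
        have hjne : j ≠ i + 1 := Finset.ne_of_mem_erase hj
        have hjA : j ∈ A := Finset.mem_of_mem_erase hj
        simp only [hgdef]
        by_cases hj0 : j = 0
        · rw [if_pos (Or.inl hj0), if_pos (Or.inl hj0)]
        by_cases hji : j = i
        · have hi1 : 1 ≤ i := by omega
          have he1 : α i % 2 = 0 := heven_i hi1
          have hγi : γ i = α i - 2 := by
            have e := hγ i
            rw [if_neg (by omega), if_pos rfl] at e
            omega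
          subst hji
          rw [if_pos (Or.inr (Nat.even_iff.mpr he1)),
            if_pos (Or.inr (by rw [hγi]; exact Nat.even_iff.mpr (by omega)))]
        have hγj : γ j = α j := by
          have e := hγ j
          rw [if_neg (by omega), if_neg (by omega)] at e
          omega
        by_cases hje : Even (α j)
        · rw [if_pos (Or.inr hje), if_pos (Or.inr (by rw [hγj]; exact hje))]
        have hjo : α j % 2 = 1 := Nat.odd_iff.mp (Nat.not_even_iff_odd.mp hje)
        have hjα : α j ≠ 0 := by omega
        have hjge : i + 2 ≤ j := by
          rcases Nat.lt_or_ge j i with h | h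
          · exact absurd (hsmall j (by omega) h) hjα
          · omega
        rw [if_neg (by tauto), if_neg (by rw [hγj]; tauto)]
        have hβ : ∀ k, (α - Finsupp.single j 1 + Finsupp.single (j - 1) 2 : ℕ →₀ ℕ) k
            = α k - (if j = k then 1 else 0) + (if j - 1 = k then 2 else 0) :=
          fun k => coords α _ _ k 1 2
        have hβlt : ∀ k < i, ¬Qp (α - Finsupp.single j 1 + Finsupp.single (j - 1) 2) k := by
          intro k hk
          rw [not_Qp_iff]
          have h1 := (not_Qp_iff α k).mp (hlt k hk)
          have e1 := hβ k
          have e2 := hβ (k + 1)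
          rw [if_neg (by omega), if_neg (by omega)] at e1
          rw [if_neg (by omega), if_neg (by omega)] at e2
          omega
        have hβQ : Qp (α - Finsupp.single j 1 + Finsupp.single (j - 1) 2) i := by
          left
          have e1 := hβ i
          rw [if_neg (by omega), if_neg (by omega)] at e1
          omega
        rw [Hf_eq hβlt hβQ, if_neg ?hpar]
        case hpar =>
          have e2 := hβ (i + 1)
          rw [if_neg (by omega)] at e2
          rw [Nat.not_odd_iff_even, Nat.even_iff]
          rcases Nat.decEq (j - 1) (i + 1) with h | h
          · rw [if_neg h] at e2
            omega
          · rw [if_pos h] at e2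
            omega
        rw [smul_monomial, smul_eq_mul, mul_one]
        have hE : ((α - Finsupp.single j 1 + Finsupp.single (j - 1) 2)
              + Finsupp.single (i + 1) 1) - Finsupp.single i 2
            = (γ - Finsupp.single j 1) + Finsupp.single (j - 1) 2 := by
          rw [hγdef]
          ext k
          simp only [Finsupp.tsub_apply, Finsupp.add_apply, Finsupp.single_apply]
          rcases eq_or_ne k i with rfl | hki
          · split_ifs <;> omega
          rcases eq_or_ne k j with rfl | hkj
          · split_ifs <;> omega
          split_ifs <;> omega
        rw [hE]
      rw [hsum1, hsum2]
      have hg1 : g (i + 1) = monomial α c := by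
        simp only [hgdef]
        rw [if_neg (by
          rw [Nat.even_iff, hγi1]
          omega)]
        have hE : (γ - Finsupp.single (i + 1) 1) + Finsupp.single (i + 1 - 1) 2 = α := by
          rw [hγdef]
          ext k
          simp only [Finsupp.tsub_apply, Finsupp.add_apply, Finsupp.single_apply,
            Nat.add_sub_cancel]
          rcases eq_or_ne k i with rfl | hki
          · split_ifs <;> omega
          split_ifs <;> omega
        rw [hE]
      rw [hg1, add_assoc, add_self h2, add_zero]
  · -- good case : α = 0 or single 0 1
    have h := not_exists.mp hex
    have HfA : Hf S α = 0 := Hf_of_not h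
    have hD : hmap S (bockDeriv S (monomial α c)) = 0 := by
      rw [hT]
      refine Finset.sum_eq_zero fun j hj => ?_
      have hjs := Finsupp.mem_support_iff.mp hj
      have hj1 := (not_Qp_iff α j).mp (h j)
      by_cases hj0 : j = 0
      · rw [if_pos (Or.inl hj0)]
      · exfalso
        obtain ⟨j', rfl⟩ : ∃ j', j = j' + 1 := ⟨j - 1, by omega⟩
        have := (not_Qp_iff α j').mp (h j')
        omega
    rw [hmap_monomial, HfA, smul_zero, map_zero, zero_add, hD]
    rcases no_bad h with rfl | rfl
    · simp [coeff_monomial]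
      rw [show ((0:ℕ→₀ℕ) = Finsupp.single 0 1) = False from by
        simp [eq_comm, Finsupp.single_eq_zero]]
      simp
    · rw [coeff_monomial, if_neg (by simp [Finsupp.single_eq_zero]), coeff_monomial, if_pos rfl]
      have : C c * X 0 = monomial (Finsupp.single 0 1) c := by
        rw [X, C_apply, monomial_mul, zero_add, mul_one]
      rw [this]
      simp

theorem main (p : MvPolynomial ℕ S) :
    bockDeriv S (hmap S p) + hmap S (bockDeriv S p) =
      p - (C (coeff 0 p) + C (coeff (Finsupp.single 0 1) p) * X 0) := by
  induction p using MvPolynomial.induction_on' with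
  | monomial α c => exact main_monomial h2 α c
  | add p q hp hq =>
    simp only [map_add]
    rw [show bockDeriv S (hmap S p) + bockDeriv S (hmap S q)
          + (hmap S (bockDeriv S p) + hmap S (bockDeriv S q))
        = (bockDeriv S (hmap S p) + hmap S (bockDeriv S p))
          + (bockDeriv S (hmap S q) + hmap S (bockDeriv S q)) from by ring]
    rw [hp, hq, coeff_add, coeff_add, C_add, C_add]
    ring

theorem coeff_bd (m : ℕ →₀ ℕ) (hm : ∀ k, m k ≤ 1) (p : MvPolynomial ℕ S) :
    coeff m (bockDeriv S p) = 0 := by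
  induction p using MvPolynomial.induction_on' with
  | monomial α c =>
    rw [bd_monomial h2, coeff_sum]
    refine Finset.sum_eq_zero fun j hj => ?_
    split_ifs with h
    · exact coeff_zero m
    · push_neg at h
      obtain ⟨hj0, -⟩ := h
      rw [coeff_monomial, if_neg ?_]
      intro hEq
      have hv := DFunLike.congr_fun hEq (j - 1)
      rw [coords α j (j - 1) (j - 1) 1 2, if_neg (by omega), if_pos rfl] at hv
      have := hm (j - 1)
      omega
  | add p q hp hq => simp only [map_add, coeff_add, hp, hq, add_zero]

end main

end BockAux

/-- Every element of `ker ∂` is congruent modulo `im ∂` to `s + t·w_1`, and such an element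
lies in `im ∂` only when `s = t = 0`. -/
theorem stmt2 (S : Type*) [CommRing S] (h2 : (2 : S) = 0) :
    (∀ p : MvPolynomial ℕ S, bockDeriv S p = 0 →
      ∃ s t : S, ∃ q : MvPolynomial ℕ S, p - (C s + C t * X 0) = bockDeriv S q)
    ∧ (∀ s t : S, (∃ q : MvPolynomial ℕ S, bockDeriv S q = C s + C t * X 0) →
        s = 0 ∧ t = 0) := by
  constructor
  · intro p hp
    refine ⟨coeff 0 p, coeff (Finsupp.single 0 1) p, BockAux.hmap S p, ?_⟩
    have hmain := BockAux.main h2 p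
    rw [hp, map_zero, add_zero] at hmain
    exact hmain.symm
  · rintro s t ⟨q, hq⟩
    have h0 := BockAux.coeff_bd h2 0 (fun k => by simp) q
    have h1 := BockAux.coeff_bd h2 (Finsupp.single 0 1)
      (fun k => by rw [Finsupp.single_apply]; split <;> omega) q
    rw [hq] at h0 h1
    constructor
    · simpa using h0
    · simpa [show (0 : ℕ →₀ ℕ) ≠ Finsupp.single 0 1 from
        fun hh => by simpa using DFunLike.congr_fun hh 0] using h1
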